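/- For every positive integer d, no subset of ℝ^d of cardinality (d² + 3d)/2 + 1 is shattered by the class of all d-dimensional ellipsoids; i.e., the VC dimension of the class of d-dimensional ellipsoids is at most (d² + 3d)/2. -/

import Mathlib

open Matrix

/-- A class `C` of subsets of `α` shatters a set `X` if every subset of `X`
is cut out of `X` by some member of `C`. -/
def Shatters {α : Type*} (C : Set (Set α)) (X : Set α) : Prop :=
  ∀ Y ⊆ X, ∃ B ∈ C, Y = X ∩ B

/-- The VC dimension of a class `C` of subsets: the supremum (in `ℕ∞`) of the
cardinalities of finite sets shattered by `C`. -/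
noncomputable def vcDim {α : Type*} (C : Set (Set α)) : ℕ∞ :=
  ⨆ (X : Finset α) (_ : Shatters C (X : Set α)), (X.card : ℕ∞)

/-- A `d`-dimensional ellipsoid: `{x ∈ ℝ^d : (x-μ)ᵀ A (x-μ) < 1}` for a center
`μ ∈ ℝ^d` and a (symmetric) positive definite matrix `A`. -/
def IsEllipsoid {d : ℕ} (E : Set (Fin d → ℝ)) : Prop :=
  ∃ (μ : Fin d → ℝ) (A : Matrix (Fin d) (Fin d) ℝ), A.PosDef ∧
    E = {x | (x - μ) ⬝ᵥ A.mulVec (x - μ) < 1}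

section Aux

private lemma card_pairs (d : ℕ) :
    Fintype.card {p : Fin d × Fin d // p.1 < p.2} * 2 = d * d - d := by
  have e : {p : Fin d × Fin d // p.1 < p.2} ≃ Σ j : Fin d, Fin j.1 :=
    { toFun := fun p => ⟨p.1.2, ⟨p.1.1.1, p.2⟩⟩
      invFun := fun q => ⟨(⟨q.2.1, lt_trans q.2.2 q.1.2⟩, q.1), q.2.2⟩
      left_inv := fun p => rfl
      right_inv := fun q => rfl }
  rw [Fintype.card_congr e, Fintype.card_sigma]
  simp only [Fintype.card_fin]
  rw [Fin.sum_univ_eq_sum_range (fun j => j), Finset.sum_range_id_mul_two,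
    mul_comm, Nat.sub_mul, one_mul]

private lemma card_ne (d : ℕ) [NeZero d] :
    Fintype.card {k : Fin d // k ≠ 0} = d - 1 := by
  simp [Fintype.card_subtype_compl, Fintype.card_subtype_eq]

private abbrev TT (d : ℕ) [NeZero d] : Type :=
  ℝ × (Fin d → ℝ) × ({p : Fin d × Fin d // p.1 < p.2} → ℝ) × ({k : Fin d // k ≠ 0} → ℝ)

private def phi (d : ℕ) [NeZero d] (v : Fin d → ℝ) : TT d :=
  (1, v, fun p => v p.1.1 * v p.1.2, fun k => v k.1 * v k.1 - v 0 * v 0)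

private lemma exists_relation (d n : ℕ) (hd : 0 < d) (hn : (d ^ 2 + 3 * d) / 2 + 1 ≤ n)
    (x : Fin n → (Fin d → ℝ)) :
    ∃ c : Fin n → ℝ, (∃ i, c i ≠ 0) ∧ (∑ i, c i = 0) ∧ (∀ k, ∑ i, c i * x i k = 0) ∧
      ∃ γ : ℝ, ∀ p q, ∑ i, c i * (x i p * x i q) = if p = q then γ else 0 := by
  haveI : NeZero d := ⟨hd.ne'⟩
  classical
  have hfr : Module.finrank ℝ (TT d) < n := by
    have hP : Fintype.card {p : Fin d × Fin d // p.1 < p.2} * 2 = d * d - d := card_pairs d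
    have hK : Fintype.card {k : Fin d // k ≠ 0} = d - 1 := card_ne d
    have hdd : d ≤ d * d := Nat.le_mul_of_pos_left d hd
    have : Module.finrank ℝ (TT d) = 1 + (d + (Fintype.card {p : Fin d × Fin d // p.1 < p.2}
        + Fintype.card {k : Fin d // k ≠ 0})) := by
      simp [TT, Module.finrank_prod, Module.finrank_pi, Module.finrank_self]
    rw [this, hK]
    have h2 : d ^ 2 = d * d := sq d
    rw [h2] at hn
    set m := d * d
    omega
  have hni : ¬ LinearIndependent ℝ (fun i => phi d (x i)) := by
    intro h
    exact absurd h.fintype_card_le_finrank (by simp only [Fintype.card_fin]; omega)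
  obtain ⟨c, hsum, i₀, hi₀⟩ := Fintype.not_linearIndependent_iff.mp hni
  simp only [phi, Prod.smul_mk] at hsum
  rw [← prod_mk_sum, ← prod_mk_sum, ← prod_mk_sum, Prod.ext_iff, Prod.ext_iff,
    Prod.ext_iff] at hsum
  obtain ⟨e1, e2, ⟨e3, e4⟩⟩ := hsum
  refine ⟨c, ⟨i₀, hi₀⟩, ?_, ?_, ?_⟩
  · simpa [smul_eq_mul] using e1
  · intro k
    have h2 := congrFun e2 k
    simpa [Finset.sum_apply, Pi.smul_apply, smul_eq_mul] using h2
  · have h3 : ∀ (p q : Fin d), p < q → ∑ i, c i * (x i p * x i q) = 0 := by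
      intro p q hpq
      have h := congrFun e3 ⟨(p, q), hpq⟩
      simpa [Finset.sum_apply, Pi.smul_apply, smul_eq_mul] using h
    have h4 : ∀ (k : Fin d), k ≠ 0 →
        ∑ i, c i * (x i k * x i k - x i 0 * x i 0) = 0 := by
      intro k hk
      have h := congrFun e4 ⟨k, hk⟩
      simpa [Finset.sum_apply, Pi.smul_apply, smul_eq_mul] using h
    refine ⟨∑ i, c i * (x i 0 * x i 0), fun p q => ?_⟩
    by_cases hpq : p = q
    · subst hpq
      rw [if_pos rfl]
      by_cases hp : p = 0
      · subst hp; rfl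
      · have := h4 p hp
        simp only [mul_sub] at this
        rw [Finset.sum_sub_distrib] at this
        linarith [this]
    · rw [if_neg hpq]
      rcases lt_or_gt_of_ne hpq with h | h
      · exact h3 p q h
      · have := h3 q p h
        simpa [mul_comm (x _ q) (x _ p)] using this

private lemma sum_identity {d n : ℕ} (x : Fin n → Fin d → ℝ) (c : Fin n → ℝ) (γ : ℝ)
    (hc0 : ∑ i, c i = 0) (hc1 : ∀ k, ∑ i, c i * x i k = 0)
    (hc2 : ∀ p q, ∑ i, c i * (x i p * x i q) = if p = q then γ else 0)
    (μ : Fin d → ℝ) (A : Matrix (Fin d) (Fin d) ℝ) :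
    ∑ i, c i * ((x i - μ) ⬝ᵥ A.mulVec (x i - μ)) = γ * ∑ p, A p p := by
  have expand : ∀ i, c i * ((x i - μ) ⬝ᵥ A.mulVec (x i - μ)) =
      ∑ p, ∑ q, A p q * (c i * ((x i p - μ p) * (x i q - μ q))) := by
    intro i
    simp only [dotProduct, Matrix.mulVec, Pi.sub_apply, Finset.mul_sum]
    exact Finset.sum_congr rfl fun p _ => Finset.sum_congr rfl fun q _ => by ring
  rw [Finset.sum_congr rfl fun i _ => expand i]
  rw [Finset.sum_comm]
  have inner : ∀ p, ∑ i, ∑ q, A p q * (c i * ((x i p - μ p) * (x i q - μ q)))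
      = A p p * γ := by
    intro p
    rw [Finset.sum_comm]
    have hq : ∀ q, ∑ i, A p q * (c i * ((x i p - μ p) * (x i q - μ q)))
        = A p q * (if p = q then γ else 0) := by
      intro q
      rw [← Finset.mul_sum]
      congr 1
      have : ∀ i, c i * ((x i p - μ p) * (x i q - μ q)) =
          c i * (x i p * x i q) - μ p * (c i * x i q) - μ q * (c i * x i p)
            + (μ p * μ q) * c i := by intro i; ring
      rw [Finset.sum_congr rfl fun i _ => this i]
      rw [Finset.sum_add_distrib, Finset.sum_sub_distrib, Finset.sum_sub_distrib,
        ← Finset.mul_sum, ← Finset.mul_sum, ← Finset.mul_sum, hc1, hc1, hc0, hc2]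
      ring
    rw [Finset.sum_congr rfl fun q _ => hq q]
    simp [Finset.sum_ite_eq, mul_ite]
  rw [Finset.sum_congr rfl fun p _ => inner p, ← Finset.sum_mul]
  ring

private lemma trace_pos' {d : ℕ} (hd : 0 < d) {A : Matrix (Fin d) (Fin d) ℝ}
    (hA : A.PosDef) : 0 < ∑ p, A p p := by
  haveI : NeZero d := ⟨hd.ne'⟩
  apply Finset.sum_pos _ Finset.univ_nonempty
  intro p _
  have h := hA.dotProduct_mulVec_pos (x := Pi.single p 1) (by
    intro h
    have := congrFun h p
    simp [Pi.single_apply] at this)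
  simpa [dotProduct, Matrix.mulVec, Pi.single_apply, Finset.sum_ite_eq, mul_ite] using h

private lemma shatters_mono {α : Type*} {C : Set (Set α)} {X X' : Set α}
    (h : Shatters C X) (hs : X' ⊆ X) : Shatters C X' := by
  intro Y hY
  obtain ⟨B, hB, hYB⟩ := h Y (hY.trans hs)
  refine ⟨B, hB, Set.Subset.antisymm (fun y hy => ⟨hY hy, (hYB ▸ hy).2⟩) ?_⟩
  rintro y ⟨hy1, hy2⟩
  rw [hYB]
  exact ⟨hs hy1, hy2⟩

private lemma not_shatters (d : ℕ) (hd : 0 < d) (X : Finset (Fin d → ℝ))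
    (hcard : X.card = (d ^ 2 + 3 * d) / 2 + 1) :
    ¬ Shatters {E : Set (Fin d → ℝ) | IsEllipsoid E} (X : Set (Fin d → ℝ)) := by
  intro hshat
  haveI : NeZero d := ⟨hd.ne'⟩
  classical
  set n := (d ^ 2 + 3 * d) / 2 + 1 with hn
  let e := X.equivFinOfCardEq hcard
  let x : Fin n → (Fin d → ℝ) := fun i => (e.symm i : Fin d → ℝ)
  have hxX : ∀ i, x i ∈ X := fun i => (e.symm i).2
  have hinj : Function.Injective x := fun i j h =>
    e.symm.injective (Subtype.ext h)
  obtain ⟨c, ⟨i₀, hi₀⟩, hc0, hc1, γ, hc2⟩ := exists_relation d n hd le_rfl x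
  have key : ∀ s : Fin n → Prop, ∃ (μ : Fin d → ℝ) (A : Matrix (Fin d) (Fin d) ℝ),
      A.PosDef ∧ ∀ i, (s i ↔ ((x i - μ) ⬝ᵥ A.mulVec (x i - μ) < 1)) := by
    intro s
    have hsub : (x '' {i | s i}) ⊆ (X : Set (Fin d → ℝ)) := by
      rintro _ ⟨i, _, rfl⟩; exact hxX i
    obtain ⟨B, hB, hYB⟩ := hshat _ hsub
    obtain ⟨μ, A, hA, rfl⟩ := hB
    refine ⟨μ, A, hA, fun i => ?_⟩
    constructor
    · intro hsi
      have hmem : x i ∈ x '' {i | s i} := ⟨i, hsi, rfl⟩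
      rw [hYB] at hmem
      exact hmem.2
    · intro hlt
      have hmem : x i ∈ (X : Set (Fin d → ℝ)) ∩ {y | (y - μ) ⬝ᵥ A.mulVec (y - μ) < 1} :=
        ⟨hxX i, hlt⟩
      rw [← hYB] at hmem
      obtain ⟨j, hj, hji⟩ := hmem
      rwa [← hinj hji]
  obtain ⟨μP, AP, hAP, hmemP⟩ := key (fun i => 0 < c i)
  obtain ⟨μN, AN, hAN, hmemN⟩ := key (fun i => c i < 0)
  set qP : Fin n → ℝ := fun i => (x i - μP) ⬝ᵥ AP.mulVec (x i - μP) with hqP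
  set qN : Fin n → ℝ := fun i => (x i - μN) ⬝ᵥ AN.mulVec (x i - μN) with hqN
  have hidP : ∑ i, c i * qP i = γ * ∑ p, AP p p := sum_identity x c γ hc0 hc1 hc2 μP AP
  have hidN : ∑ i, c i * qN i = γ * ∑ p, AN p p := sum_identity x c γ hc0 hc1 hc2 μN AN
  have htermP : ∀ i, c i * qP i ≤ c i := by
    intro i
    by_cases h : 0 < c i
    · nlinarith [(hmemP i).1 h]
    · push_neg at h
      have hq : ¬ qP i < 1 := fun hq => absurd ((hmemP i).2 hq) (not_lt.mpr h)
      push_neg at hq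
      nlinarith
  have htermN : ∀ i, c i ≤ c i * qN i := by
    intro i
    by_cases h : c i < 0
    · nlinarith [(hmemN i).1 h]
    · push_neg at h
      have hq : ¬ qN i < 1 := fun hq => absurd ((hmemN i).2 hq) (not_lt.mpr h)
      push_neg at hq
      nlinarith
  have hγle : γ * ∑ p, AP p p ≤ 0 := by
    rw [← hidP, ← hc0]
    exact Finset.sum_le_sum fun i _ => htermP i
  have hγge : 0 ≤ γ * ∑ p, AN p p := by
    rw [← hidN, ← hc0]
    exact Finset.sum_le_sum fun i _ => htermN i
  have htP : 0 < ∑ p, AP p p := trace_pos' hd hAP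
  have htN : 0 < ∑ p, AN p p := trace_pos' hd hAN
  have hγ : γ = 0 := by nlinarith
  by_cases hpos : ∃ i, 0 < c i
  · obtain ⟨j, hj⟩ := hpos
    have hstrict : ∑ i, c i * qP i < ∑ i, c i :=
      Finset.sum_lt_sum (fun i _ => htermP i)
        ⟨j, Finset.mem_univ j, by nlinarith [(hmemP j).1 hj]⟩
    rw [hidP, hc0, hγ, zero_mul] at hstrict
    exact lt_irrefl 0 hstrict
  · push_neg at hpos
    have hj : c i₀ < 0 := lt_of_le_of_ne (hpos i₀) hi₀
    have hstrict : ∑ i, c i < ∑ i, c i * qN i :=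
      Finset.sum_lt_sum (fun i _ => htermN i)
        ⟨i₀, Finset.mem_univ i₀, by nlinarith [(hmemN i₀).1 hj]⟩
    rw [hidN, hc0, hγ, zero_mul] at hstrict
    exact lt_irrefl 0 hstrict

end Aux

/-- No subset of `ℝ^d` of cardinality `(d² + 3d)/2 + 1` is shattered by the class
of `d`-dimensional ellipsoids; i.e. the VC dimension of this class is at most
`(d² + 3d)/2`. -/
theorem vcDim_ellipsoids_upper (d : ℕ) (hd : 0 < d) :
    (∀ X : Finset (Fin d → ℝ), X.card = (d ^ 2 + 3 * d) / 2 + 1 →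
      ¬ Shatters {E : Set (Fin d → ℝ) | IsEllipsoid E} (X : Set (Fin d → ℝ))) ∧
    vcDim {E : Set (Fin d → ℝ) | IsEllipsoid E} ≤ ((d ^ 2 + 3 * d) / 2 : ℕ) := by
  constructor
  · exact fun X hX => not_shatters d hd X hX
  · refine iSup_le fun X => iSup_le fun hX => ?_
    have hcard : X.card ≤ (d ^ 2 + 3 * d) / 2 := by
      by_contra h
      push_neg at h
      obtain ⟨X', hsub, hcard'⟩ := Finset.exists_subset_card_eq h
      exact not_shatters d hd X' hcard'
        (shatters_mono hX (Finset.coe_subset.mpr hsub))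
    exact_mod_cast Nat.cast_le.mpr hcard
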